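/- Let n and k be integers with 1 ≤ k < n. Then the k-equidistant number of the Johnson graph J(n,k) equals ⌊n/k⌋, i.e., eq_k(J(n,k)) = ⌊n/k⌋. -/

import Mathlib

open SimpleGraph

/-- `S` is a `t`-equidistant set of `G`: all distinct vertices of `S` are at distance
exactly `t` in `G`. -/
def IsEquidistantSet {V : Type*} (G : SimpleGraph V) (t : ℕ) (S : Finset V) : Prop :=
  (S : Set V).Pairwise fun u v => G.dist u v = t

/-- The `t`-equidistant number of `G`: the maximum size of a `t`-equidistant set. -/
noncomputable def eqNum {V : Type*} [Fintype V] (G : SimpleGraph V) (t : ℕ) : ℕ :=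
  sSup {n : ℕ | ∃ S : Finset V, IsEquidistantSet G t S ∧ S.card = n}

/-- `S` is a `t`-independent set of `G`: all distinct vertices of `S` are at pairwise
distance greater than `t` in `G`. -/
def IsTIndepSet {V : Type*} (G : SimpleGraph V) (t : ℕ) (S : Finset V) : Prop :=
  (S : Set V).Pairwise fun u v => t < G.dist u v

/-- The `t`-independence number of `G`. -/
noncomputable def indepNumT {V : Type*} [Fintype V] (G : SimpleGraph V) (t : ℕ) : ℕ :=
  sSup {n : ℕ | ∃ S : Finset V, IsTIndepSet G t S ∧ S.card = n}

/-- The equidistant number of `G`: `max {eq_t(G) : 1 ≤ t ≤ diam G}`. -/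
noncomputable def eqTotalNum {V : Type*} [Fintype V] (G : SimpleGraph V) : ℕ :=
  (Finset.Icc 1 G.diam).sup (eqNum G)

/-- The Johnson graph `J(n,k)`: vertices are the `k`-element subsets of `Fin n`, two subsets
being adjacent iff their intersection has exactly `k - 1` elements. -/
def johnsonGraph (n k : ℕ) : SimpleGraph {s : Finset (Fin n) // s.card = k} where
  Adj a b := a ≠ b ∧ (a.1 ∩ b.1).card = k - 1
  symm := by
    constructor
    intro a b h
    exact ⟨h.1.symm, by rw [Finset.inter_comm]; exact h.2⟩
  loopless := by
    constructor
    intro a h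
    exact h.1 rfl

namespace JAux

variable {n k : ℕ}

lemma card_sdiff_eq (a b : {s : Finset (Fin n) // s.card = k}) :
    (a.1 \ b.1).card = k - (a.1 ∩ b.1).card := by
  have h := Finset.card_inter_add_card_sdiff a.1 b.1
  have := a.2
  omega

lemma inter_card_le (a b : {s : Finset (Fin n) // s.card = k}) :
    (a.1 ∩ b.1).card ≤ k := by
  calc (a.1 ∩ b.1).card ≤ a.1.card := Finset.card_le_card Finset.inter_subset_left
  _ = k := a.2

lemma walk_bound (a b : {s : Finset (Fin n) // s.card = k})
    (w : (johnsonGraph n k).Walk a b) :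
    k ≤ (a.1 ∩ b.1).card + w.length := by
  induction w with
  | nil => rename_i u; simp [u.2]
  | @cons u v b h p ih =>
    have h1 : (v.1 \ u.1).card = 1 := by
      have := card_sdiff_eq v u
      rw [Finset.inter_comm] at this
      rw [this, h.2]
      have hx : 1 ≤ k := by
        by_contra hc
        have hk0 : k = 0 := by omega
        subst hk0
        exact h.1 (Subtype.ext (by rw [Finset.card_eq_zero.mp u.2, Finset.card_eq_zero.mp v.2]))
      omega
    have hsub : v.1 ∩ b.1 ⊆ (u.1 ∩ b.1) ∪ (v.1 \ u.1) := by
      intro x hx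
      simp only [Finset.mem_inter, Finset.mem_union, Finset.mem_sdiff] at *
      tauto
    have := Finset.card_le_card hsub
    have := Finset.card_union_le (u.1 ∩ b.1) (v.1 \ u.1)
    simp only [SimpleGraph.Walk.length_cons]
    omega


lemma exists_walk : ∀ (m : ℕ) (a b : {s : Finset (Fin n) // s.card = k}),
    (a.1 \ b.1).card = m → ∃ w : (johnsonGraph n k).Walk a b, w.length = m := by
  intro m
  induction m with
  | zero =>
    intro a b hm
    have hsub : a.1 ⊆ b.1 := by
      rw [← Finset.sdiff_eq_empty_iff_subset]
      exact Finset.card_eq_zero.mp hm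
    have hab : a = b := Subtype.ext (Finset.eq_of_subset_of_card_le hsub (by rw [a.2, b.2]))
    subst hab
    exact ⟨SimpleGraph.Walk.nil, rfl⟩
  | succ m ih =>
    intro a b hm
    obtain ⟨x, hx⟩ : (a.1 \ b.1).Nonempty := Finset.card_pos.mp (by omega)
    have hba : (b.1 \ a.1).card = m + 1 := by
      have := card_sdiff_eq a b
      have := card_sdiff_eq b a
      rw [Finset.inter_comm] at this
      omega
    obtain ⟨y, hy⟩ : (b.1 \ a.1).Nonempty := Finset.card_pos.mp (by omega)
    simp only [Finset.mem_sdiff] at hx hy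
    have hxa := hx.1
    have hya : y ∉ a.1 := hy.2
    have hk1 : 1 ≤ k := by
      have := Finset.card_pos.mpr ⟨x, hxa⟩
      omega
    have hcard : (insert y (a.1.erase x)).card = k := by
      rw [Finset.card_insert_of_notMem (fun h => hya (Finset.mem_of_mem_erase h)),
        Finset.card_erase_of_mem hxa, a.2]
      omega
    set a' : {s : Finset (Fin n) // s.card = k} := ⟨insert y (a.1.erase x), hcard⟩ with ha'
    have hinter : a.1 ∩ a'.1 = a.1.erase x := by
      ext z
      simp only [ha', Finset.mem_inter, Finset.mem_insert, Finset.mem_erase]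
      constructor
      · rintro ⟨hza, hz⟩
        rcases hz with rfl | hz
        · exact absurd hza hya
        · exact hz
      · rintro ⟨hzx, hza⟩
        exact ⟨hza, Or.inr ⟨hzx, hza⟩⟩
    have hadj : (johnsonGraph n k).Adj a a' := by
      refine ⟨fun h => ?_, ?_⟩
      · have : x ∈ a'.1 := h ▸ hxa
        simp only [ha', Finset.mem_insert, Finset.mem_erase] at this
        rcases this with rfl | ⟨hne, _⟩
        · exact hya hxa
        · exact hne rfl
      · rw [hinter, Finset.card_erase_of_mem hxa, a.2]
    have hdiff : a'.1 \ b.1 = (a.1 \ b.1).erase x := by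
      ext z
      simp only [ha', Finset.mem_sdiff, Finset.mem_insert, Finset.mem_erase]
      constructor
      · rintro ⟨rfl | ⟨hzx, hza⟩, hzb⟩
        · exact absurd hy.1 hzb
        · exact ⟨hzx, hza, hzb⟩
      · rintro ⟨hzx, hza, hzb⟩
        exact ⟨Or.inr ⟨hzx, hza⟩, hzb⟩
    obtain ⟨w, hw⟩ := ih a' b (by
      rw [hdiff, Finset.card_erase_of_mem (Finset.mem_sdiff.mpr hx), hm]; omega)
    exact ⟨SimpleGraph.Walk.cons hadj w, by simp [hw]⟩

lemma dist_eq (a b : {s : Finset (Fin n) // s.card = k}) :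
    (johnsonGraph n k).dist a b = (a.1 \ b.1).card := by
  obtain ⟨w, hw⟩ := exists_walk _ a b rfl
  have hr : (johnsonGraph n k).Reachable a b := ⟨w⟩
  refine le_antisymm (hw ▸ SimpleGraph.dist_le w) ?_
  obtain ⟨p, hp⟩ := hr.exists_walk_length_eq_dist
  have h0 := walk_bound a b p
  rw [hp] at h0
  have h1 := card_sdiff_eq a b
  have h2 := inter_card_le a b
  omega


lemma card_le (hk : 1 ≤ k) (S : Finset {s : Finset (Fin n) // s.card = k})
    (hS : (S : Set _).Pairwise fun u v => (johnsonGraph n k).dist u v = k) :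
    S.card ≤ n / k := by
  have hdisj : ∀ u ∈ S, ∀ v ∈ S, u ≠ v → Disjoint u.1 v.1 := by
    intro u hu v hv huv
    have hd := hS hu hv huv
    simp only at hd
    rw [dist_eq] at hd
    have h1 := card_sdiff_eq u v
    have h2 := inter_card_le u v
    rw [Finset.disjoint_iff_inter_eq_empty]
    exact Finset.card_eq_zero.mp (by omega)
  have hcard : (S.biUnion fun v => v.1).card = S.card * k := by
    rw [Finset.card_biUnion hdisj, Finset.sum_congr rfl (fun v _ => v.2),
      Finset.sum_const, smul_eq_mul]
  have hle : (S.biUnion fun v => v.1).card ≤ n := by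
    have := Finset.card_le_univ (S.biUnion fun v => v.1)
    simpa using this
  exact (Nat.le_div_iff_mul_le hk).mpr (by omega)

lemma exists_big (hk : 1 ≤ k) (hkn : k < n) :
    ∃ S : Finset {s : Finset (Fin n) // s.card = k},
      ((S : Set _).Pairwise fun u v => (johnsonGraph n k).dist u v = k) ∧ S.card = n / k := by
  have hn : 0 < n := by omega
  set f : ℕ → ℕ → Fin n := fun i j => ⟨(i * k + j) % n, Nat.mod_lt _ hn⟩ with hf
  have hv : ∀ i < n / k, ∀ j < k, i * k + j < n := by
    intro i hi j hj
    have h1 : (i + 1) * k ≤ (n / k) * k := Nat.mul_le_mul_right k (by omega)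
    have h2 : (n / k) * k ≤ n := Nat.div_mul_le_self n k
    have : (i + 1) * k = i * k + k := by ring
    omega
  set A : ℕ → Finset (Fin n) := fun i => (Finset.range k).image (f i) with hA
  have hmem : ∀ i < n / k, ∀ x ∈ A i, i * k ≤ x.val ∧ x.val < i * k + k := by
    intro i hi x hx
    simp only [hA, Finset.mem_image, Finset.mem_range] at hx
    obtain ⟨j, hj, rfl⟩ := hx
    simp only [hf, Nat.mod_eq_of_lt (hv i hi j hj)]
    omega
  have hAcard : ∀ i, i < n / k → (A i).card = k := by
    intro i hi
    rw [hA, Finset.card_image_of_injOn, Finset.card_range]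
    intro j1 h1 j2 h2 he
    simp only [Finset.coe_range, Set.mem_Iio] at h1 h2
    have := congrArg Fin.val he
    simp only [hf, Nat.mod_eq_of_lt (hv i hi j1 h1), Nat.mod_eq_of_lt (hv i hi j2 h2)] at this
    omega
  have hdisjA : ∀ i i', i < n / k → i' < n / k → i ≠ i' → Disjoint (A i) (A i') := by
    have key : ∀ i i', i < i' → i * k + k ≤ i' * k := by
      intro i i' h
      have := Nat.mul_le_mul_right k (show i + 1 ≤ i' by omega)
      have h2 : (i + 1) * k = i * k + k := by ring
      omega
    intro i i' hi hi' hne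
    rw [Finset.disjoint_left]
    intro x hx hx'
    have m1 := hmem i hi x hx
    have m2 := hmem i' hi' x hx'
    rcases Nat.lt_or_ge i i' with h | h
    · have := key i i' h; omega
    · have := key i' i (by omega); omega
  refine ⟨(Finset.range (n / k)).attach.image
      (fun i => ⟨A i.1, hAcard i.1 (Finset.mem_range.mp i.2)⟩), ?_, ?_⟩
  · intro u hu v hv' huv
    simp only [Finset.coe_image, Set.mem_image, Finset.mem_coe, Finset.mem_attach] at hu hv'
    obtain ⟨i, _, rfl⟩ := hu
    obtain ⟨i', _, rfl⟩ := hv'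
    have hii : i.1 ≠ i'.1 := by
      intro h
      exact huv (by ext1; simp only; rw [h])
    have hd := hdisjA i.1 i'.1 (Finset.mem_range.mp i.2) (Finset.mem_range.mp i'.2) hii
    rw [dist_eq]
    simp only
    rw [Finset.sdiff_eq_self_of_disjoint hd, hAcard i.1 (Finset.mem_range.mp i.2)]
  · rw [Finset.card_image_of_injOn, Finset.card_attach, Finset.card_range]
    intro i _ i' _ he
    have hAe : A i.1 = A i'.1 := congrArg Subtype.val he
    by_contra hne
    have hii : i.1 ≠ i'.1 := fun h => hne (Subtype.ext h)
    have hd := hdisjA i.1 i'.1 (Finset.mem_range.mp i.2) (Finset.mem_range.mp i'.2) hii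
    rw [hAe] at hd
    have hemp : A i'.1 = ∅ := (Finset.disjoint_self_iff_empty _).mp hd
    have hc := hAcard i'.1 (Finset.mem_range.mp i'.2)
    rw [hemp, Finset.card_empty] at hc
    omega

end JAux

/-- For `1 ≤ k < n`, the `k`-equidistant number of the Johnson graph
`J(n,k)` is `⌊n/k⌋`. -/
theorem eqNum_johnsonGraph (n k : ℕ) (hk : 1 ≤ k) (hkn : k < n) :
    eqNum (johnsonGraph n k) k = n / k := by
  unfold eqNum
  obtain ⟨S0, hS0p, hS0c⟩ := JAux.exists_big hk hkn
  have hmem : (n / k) ∈ {m : ℕ | ∃ S : Finset {s : Finset (Fin n) // s.card = k},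
      IsEquidistantSet (johnsonGraph n k) k S ∧ S.card = m} := ⟨S0, hS0p, hS0c⟩
  have hbdd : BddAbove {m : ℕ | ∃ S : Finset {s : Finset (Fin n) // s.card = k},
      IsEquidistantSet (johnsonGraph n k) k S ∧ S.card = m} := by
    refine ⟨n / k, ?_⟩
    rintro m ⟨S, hS, rfl⟩
    exact JAux.card_le hk S hS
  refine le_antisymm (csSup_le ⟨n / k, hmem⟩ ?_) (le_csSup hbdd hmem)
  rintro m ⟨S, hS, rfl⟩
  exact JAux.card_le hk S hS
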